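/- Let s be a nonzero complex number and for each positive integer n define [n] = i^{-(n+1)}·s^n + i^{(n+1)}·s^{-n}. Then for every positive integer n, the recursion [2n+1] = (2n+1)·[1] − [1]·∑_{k=1}^{n} [k]^2 holds. -/
import Mathlib

open Complex Finset

theorem stmt_1 (s : ℂ) (hs : s ≠ 0)
    (a : ℕ → ℂ)
    (ha : ∀ n : ℕ, 0 < n → a n = I ^ (-(n + 1 : ℤ)) * s ^ (n : ℤ) + I ^ ((n + 1 : ℤ)) * s ^ (-(n : ℤ))) :
    ∀ n : ℕ, 0 < n →
      a (2 * n + 1) = (2 * n + 1 : ℂ) * a 1 - a 1 * ∑ k ∈ Finset.Icc 1 n, (a k) ^ 2 := by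
  have hI : (I:ℂ) ≠ 0 := I_ne_zero
  have hinv : ∀ k : ℕ, ((-1:ℂ)^k)⁻¹ = (-1:ℂ)^k := by
    intro k
    refine inv_eq_of_mul_eq_one_left ?_
    rw [← mul_pow]; norm_num
  -- closed form for a 1
  have ha1 : a 1 = -(s + s⁻¹) := by
    rw [ha 1 one_pos]
    rw [show (((1:ℕ):ℤ) + 1) = 2 by norm_num, show ((1:ℕ):ℤ) = 1 by norm_num]
    rw [zpow_neg, zpow_two, I_mul_I, zpow_one, zpow_neg, zpow_one]
    field_simp
    ring
  -- squares
  have hsq : ∀ k : ℕ, 0 < k → a k ^ 2 = (-1)^(k+1) * ((s^k)^2 + ((s⁻¹)^k)^2) + 2 := by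
    intro k hk
    have hJ : (I:ℂ)^(k+1) ≠ 0 := pow_ne_zero _ hI
    have hJ2 : ((I:ℂ)^(k+1))^2 = (-1)^(k+1) := by
      rw [← pow_mul, mul_comm, pow_mul, I_sq]
    have hST : s^k * (s⁻¹)^k = 1 := by
      rw [← mul_pow, mul_inv_cancel₀ hs, one_pow]
    have e1 : (I:ℂ)^(-((k:ℤ)+1)) = ((I:ℂ)^(k+1))⁻¹ := by
      rw [zpow_neg]; norm_cast
    have e2 : (I:ℂ)^(((k:ℤ)+1)) = (I:ℂ)^(k+1) := by norm_cast
    have e3 : s^(-(k:ℤ)) = (s⁻¹)^k := by rw [zpow_neg, inv_pow]; norm_cast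
    have e4 : s^((k:ℤ)) = s^k := by norm_cast
    rw [ha k hk, e1, e2, e3, e4]
    have expand : (((I:ℂ)^(k+1))⁻¹ * s^k + (I:ℂ)^(k+1) * (s⁻¹)^k)^2
        = (((I:ℂ)^(k+1))^2)⁻¹ * (s^k)^2 + ((I:ℂ)^(k+1))^2 * ((s⁻¹)^k)^2 + 2*(s^k*(s⁻¹)^k) := by
      field_simp; ring
    rw [expand, hJ2, hST, hinv]; ring
  -- closed form for odd terms
  have hodd : ∀ k : ℕ, a (2*k+1) = (-1)^(k+1) * ((s^k)^2 * s + ((s⁻¹)^k)^2 * s⁻¹) := by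
    intro k
    have eI : (I:ℂ)^(((2*k+1:ℕ):ℤ)+1) = (-1:ℂ)^(k+1) := by
      rw [show ((2*k+1:ℕ):ℤ)+1 = ((2*(k+1):ℕ):ℤ) by push_cast; ring, zpow_natCast,
        pow_mul, I_sq]
    have eI' : (I:ℂ)^(-(((2*k+1:ℕ):ℤ)+1)) = (-1:ℂ)^(k+1) := by
      rw [zpow_neg, eI, hinv]
    have eS : s^(((2*k+1:ℕ):ℤ)) = (s^k)^2 * s := by
      rw [zpow_natCast, pow_succ, mul_comm 2 k, pow_mul]
    have eS' : s^(-((2*k+1:ℕ):ℤ)) = ((s⁻¹)^k)^2 * s⁻¹ := by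
      rw [zpow_neg, zpow_natCast, ← inv_pow, pow_succ, mul_comm 2 k, pow_mul]
    rw [ha (2*k+1) (by omega), eI, eI', eS, eS']
    ring
  intro n hn
  induction n, hn using Nat.le_induction with
  | base =>
    rw [hodd 1]
    simp only [Finset.Icc_self, Finset.sum_singleton]
    rw [hsq 1 one_pos, ha1]
    push_cast
    field_simp
    ring
  | succ n hn ih =>
    rw [hodd (n+1), Finset.sum_Icc_succ_top (by omega : 1 ≤ n+1),
      hsq (n+1) (by omega), ha1]
    rw [ha1, hodd n] at ih
    push_cast
    linear_combination ih + ((-1:ℂ)^(n+1) * ((s^n)^2*s + (s⁻¹^n)^2*s⁻¹)) * (mul_inv_cancel₀ hs)
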